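/- Let ε > 0, m a positive integer, X a compact metric space, and B a closed subset of X. Let f' : B → [0,1]^m and f̃ : X → [0,1]^m be continuous with ‖f'(x) − f̃(x)‖_∞ < ε for all x ∈ B. Then there exists a continuous function f : X → [0,1]^m with f|_B = f' and ‖f(x) − f̃(x)‖_∞ < ε for all x ∈ X. -/
import Mathlib


/-- Controlled Tietze extension: a continuous `f' : B → [0,1]^m` on a closed
subset `B` of a compact metric space that is uniformly `ε`-close to a continuous
`f̃ : X → [0,1]^m` extends to a continuous `f : X → [0,1]^m` that is `ε`-close to `f̃`. -/
theorem stmt4 {X : Type*} [MetricSpace X] [CompactSpace X]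
    (ε : ℝ) (hε : 0 < ε) (m : ℕ) (hm : 0 < m)
    (B : Set X) (hB : IsClosed B)
    (f' : B → Fin m → ℝ) (hf' : Continuous f')
    (hf'r : ∀ x i, f' x i ∈ Set.Icc (0:ℝ) 1)
    (ftil : X → Fin m → ℝ) (hftil : Continuous ftil)
    (hftilr : ∀ x i, ftil x i ∈ Set.Icc (0:ℝ) 1)
    (hclose : ∀ x : B, ‖f' x - ftil x‖ < ε) :
    ∃ f : X → Fin m → ℝ, Continuous f ∧ (∀ x i, f x i ∈ Set.Icc (0:ℝ) 1) ∧
      (∀ x : B, f x = f' x) ∧ ∀ x : X, ‖f x - ftil x‖ < ε := by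
  rcases B.eq_empty_or_nonempty with hBe | hBne
  · refine ⟨ftil, hftil, hftilr, ?_, ?_⟩
    · rintro ⟨x, hx⟩
      simp [hBe] at hx
    · intro x
      simpa using hε
  -- B is nonempty
  haveI : Nonempty B := hBne.to_subtype
  -- the difference function on B
  set g : B → Fin m → ℝ := fun x => f' x - ftil x with hg
  have hgc : Continuous g := hf'.sub (hftil.comp continuous_subtype_val)
  -- find the max of ‖g‖ over B (compact)
  haveI : CompactSpace B := isCompact_iff_compactSpace.mp hB.isCompact
  obtain ⟨x₀, -, hx₀m⟩ := isCompact_univ.exists_isMaxOn Set.univ_nonempty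
    ((hgc.norm).continuousOn : ContinuousOn (fun x => ‖g x‖) Set.univ)
  have hx₀ : ∀ x : B, x ∈ Set.univ → ‖g x‖ ≤ ‖g x₀‖ := fun x hx => hx₀m hx
  set δ : ℝ := ‖g x₀‖ with hδ
  have hδ0 : 0 ≤ δ := norm_nonneg _
  have hδε : δ < ε := hclose x₀
  have hgδ : ∀ x : B, ∀ i, g x i ∈ Set.Icc (-δ) δ := by
    intro x i
    have h1 : |g x i| ≤ ‖g x‖ := by
      simpa using norm_le_pi_norm (g x) i
    have h2 : ‖g x‖ ≤ δ := hx₀ x (Set.mem_univ x)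
    exact abs_le.mp (h1.trans h2)
  -- extend each coordinate of g via Tietze
  have hclemb : Topology.IsClosedEmbedding ((↑) : B → X) := hB.isClosedEmbedding_subtypeVal
  have hGi : ∀ i : Fin m, ∃ G : X → ℝ, Continuous G ∧ (∀ y, G y ∈ Set.Icc (-δ) δ) ∧
      ∀ x : B, G x = g x i := by
    intro i
    have hci : Continuous (fun x : B => g x i) := (continuous_apply i).comp hgc
    obtain ⟨G, hG1, hG2⟩ := BoundedContinuousFunction.exists_extension_forall_mem_Icc_of_isClosedEmbedding
      (BoundedContinuousFunction.mkOfCompact ⟨fun x : B => g x i, hci⟩)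
      (fun x => hgδ x i) (by linarith) hclemb
    exact ⟨fun y => G y, G.continuous, hG1, fun x => congrFun hG2 x⟩
  choose G hGc hGmem hGeq using hGi
  -- define f by clamping ftil + G to [0,1]
  refine ⟨fun x i => max 0 (min 1 (ftil x i + G i x)), ?_, ?_, ?_, ?_⟩
  · apply continuous_pi
    intro i
    exact (continuous_const.max (continuous_const.min
      (((continuous_apply i).comp hftil).add (hGc i))))
  · intro x i
    constructor
    · exact le_max_left _ _
    · exact max_le zero_le_one (min_le_left _ _)
  · intro x
    funext i
    have h1 : ftil (x : X) i + G i x = f' x i := by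
      rw [hGeq i x]
      simp [hg]
    show max 0 (min 1 (ftil (x : X) i + G i x)) = f' x i
    rw [h1]
    rcases hf'r x i with ⟨h0, h1'⟩
    rw [min_eq_right h1', max_eq_right h0]
  · intro x
    rw [pi_norm_lt_iff hε]
    intro i
    have hsm : ftil x i ∈ Set.Icc (0:ℝ) 1 := hftilr x i
    have key : |max 0 (min 1 (ftil x i + G i x)) - ftil x i| ≤ |G i x| := by
      have h2 := abs_max_sub_max_le_abs (min 1 (ftil x i + G i x)) (min 1 (ftil x i)) 0
      have h3 := abs_min_sub_min_le_max (1:ℝ) (ftil x i + G i x) 1 (ftil x i)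
      have e1 : min (1:ℝ) (ftil x i) = ftil x i := min_eq_right hsm.2
      have e2 : max (ftil x i) 0 = ftil x i := max_eq_left hsm.1
      rw [e1, e2] at h2
      have h5 : |min (1:ℝ) (ftil x i + G i x) - min 1 (ftil x i)| ≤ |G i x| := by
        refine h3.trans ?_
        simp [e1]
      rw [e1] at h5
      calc |max 0 (min 1 (ftil x i + G i x)) - ftil x i|
          = |max (min 1 (ftil x i + G i x)) 0 - ftil x i| := by rw [max_comm]
        _ ≤ |min 1 (ftil x i + G i x) - ftil x i| := h2
        _ ≤ |G i x| := h5
    have hGb : |G i x| ≤ δ := abs_le.mpr (hGmem i x)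
    calc ‖(fun j => max 0 (min 1 (ftil x j + G j x))) i - ftil x i‖
        = |max 0 (min 1 (ftil x i + G i x)) - ftil x i| := by simp [Real.norm_eq_abs]
      _ ≤ |G i x| := key
      _ ≤ δ := hGb
      _ < ε := hδε
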